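/- arXiv:1512.07181 — 3 statements merged into one kernel-verified Lean document; each statement's English description precedes it below -/
import Mathlib

section
/- Define s(k) = (-4k^4 + 4k^2 - 4)E(k) + (2k^4 - 6k^2 + 4)K(k) for k in (0,1). Then s(k) < 0 for all k in (0,1). -/
open Real

lemma key (w a b : ℝ) (hw0 : 0 < w) (ha0 : w ≤ a) (ha1 : a ≤ 1)
    (hb0 : w ≤ b) (hb1 : b ≤ 1) (hab : a^2 + b^2 = 1 + w^2) :
    (-4*(w^4-w^2+1))*(a+b) + (2*w^2*(1+w^2))/a + (2*w^2*(1+w^2))/b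
      ≤ (-4*(w^4-w^2+1))*(1+w) + (2*w^2*(1+w^2)) + (2*w^2*(1+w^2))/w := by
  set A : ℝ := -4*(w^4-w^2+1) with hA
  set B : ℝ := 2*w^2*(1+w^2) with hB
  have ha0' : 0 < a := lt_of_lt_of_le hw0 ha0
  have hb0' : 0 < b := lt_of_lt_of_le hw0 hb0
  have hAneg : A < 0 := by nlinarith [sq_nonneg (w^2 - 1), sq_nonneg w]
  have hBpos : 0 < B := by positivity
  have hq : w ≤ a * b := by
    have h1 : 0 ≤ a^2 - w^2 := by nlinarith
    have h2 : 0 ≤ b^2 - w^2 := by nlinarith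
    nlinarith [mul_nonneg h1 h2, mul_pos ha0' hb0']
  have hp : 1 + w ≤ a + b := by nlinarith [add_pos ha0' hb0']
  have hAwB : A * w + B ≤ 0 := by
    nlinarith [mul_nonneg (mul_nonneg hw0.le (sq_nonneg (1-w)))
      (by positivity : (0:ℝ) ≤ 2*w^2 + 3*w + 2)]
  have hAqB : A * (a*b) + B ≤ 0 := by
    nlinarith [mul_nonneg (neg_nonneg.2 hAneg.le) (sub_nonneg.2 hq)]
  have step1 : w*(a+b)*(A*(a*b)+B) ≤ w*(1+w)*(A*(a*b)+B) := by
    nlinarith [mul_nonneg (mul_nonneg hw0.le (sub_nonneg.2 hp)) (neg_nonneg.2 hAqB)]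
  have step2 : w*(1+w)*(A*(a*b)+B) ≤ (1+w)*(A*w+B)*(a*b) := by
    nlinarith [mul_nonneg (mul_nonneg (by linarith : (0:ℝ) ≤ 1+w) hBpos.le) (sub_nonneg.2 hq)]
  have H : w*(a+b)*(A*(a*b)+B) ≤ (1+w)*(A*w+B)*(a*b) := step1.trans step2
  have habw : (0:ℝ) < a*b*w := by positivity
  have e1 : A*(a+b) + B/a + B/b = (w*(a+b)*(A*(a*b)+B))/(a*b*w) := by
    field_simp; ring
  have e2 : A*(1+w) + B + B/w = ((1+w)*(A*w+B)*(a*b))/(a*b*w) := by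
    field_simp; ring
  rw [e1, e2]
  exact div_le_div_of_nonneg_right H habw.le

/-- The complete elliptic integral of the first kind. -/
noncomputable def ellipticK (k : ℝ) : ℝ :=
  ∫ θ in (0:ℝ)..(Real.pi/2), 1 / Real.sqrt (1 - k^2 * Real.sin θ ^ 2)

/-- The complete elliptic integral of the second kind. -/
noncomputable def ellipticE (k : ℝ) : ℝ :=
  ∫ θ in (0:ℝ)..(Real.pi/2), Real.sqrt (1 - k^2 * Real.sin θ ^ 2)

/-- s(k) = (-4k⁴ + 4k² - 4)E(k) + (2k⁴ - 6k² + 4)K(k). -/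
noncomputable def sFun (k : ℝ) : ℝ :=
  (-4*k^4 + 4*k^2 - 4) * ellipticE k + (2*k^4 - 6*k^2 + 4) * ellipticK k

/-- The paired integrand. -/
noncomputable def Fk (k θ : ℝ) : ℝ :=
  (-4*k^4 + 4*k^2 - 4) * Real.sqrt (1 - k^2 * Real.sin θ ^ 2)
    + (2*k^4 - 6*k^2 + 4) * (1 / Real.sqrt (1 - k^2 * Real.sin θ ^ 2))

/-- The negative constant bounding Fk θ + Fk (π/2 - θ). -/
noncomputable def Ck (k : ℝ) : ℝ :=
  (-4*k^4 + 4*k^2 - 4)*(1 + Real.sqrt (1-k^2)) + (2*k^4 - 6*k^2 + 4)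
    + (2*k^4 - 6*k^2 + 4)/Real.sqrt (1-k^2)

lemma u_pos (k : ℝ) (hk2 : k^2 < 1) (θ : ℝ) : 0 < 1 - k^2 * Real.sin θ ^ 2 := by
  nlinarith [Real.sin_sq_le_one θ, sq_nonneg (k * Real.sin θ), sq_nonneg (Real.sin θ)]

lemma Fk_cont (k : ℝ) (hk2 : k^2 < 1) : Continuous (Fk k) := by
  have hu : Continuous (fun θ : ℝ => 1 - k^2 * Real.sin θ ^ 2) := by continuity
  apply Continuous.add
  · exact continuous_const.mul hu.sqrt
  · exact continuous_const.mul (continuous_const.div hu.sqrt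
      (fun θ => (Real.sqrt_pos.2 (u_pos k hk2 θ)).ne'))

lemma sFun_eq (k : ℝ) (hk2 : k^2 < 1) :
    sFun k = ∫ θ in (0:ℝ)..(Real.pi/2), Fk k θ := by
  have hu : Continuous (fun θ : ℝ => 1 - k^2 * Real.sin θ ^ 2) := by continuity
  have i1 : IntervalIntegrable
      (fun θ => (-4*k^4 + 4*k^2 - 4) * Real.sqrt (1 - k^2 * Real.sin θ ^ 2))
      MeasureTheory.volume 0 (Real.pi/2) :=
    (continuous_const.mul hu.sqrt).intervalIntegrable _ _
  have i2 : IntervalIntegrable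
      (fun θ => (2*k^4 - 6*k^2 + 4) * (1 / Real.sqrt (1 - k^2 * Real.sin θ ^ 2)))
      MeasureTheory.volume 0 (Real.pi/2) :=
    (continuous_const.mul (continuous_const.div hu.sqrt
      (fun θ => (Real.sqrt_pos.2 (u_pos k hk2 θ)).ne'))).intervalIntegrable _ _
  calc sFun k
      = (∫ θ in (0:ℝ)..(Real.pi/2),
            (-4*k^4 + 4*k^2 - 4) * Real.sqrt (1 - k^2 * Real.sin θ ^ 2))
        + ∫ θ in (0:ℝ)..(Real.pi/2),
            (2*k^4 - 6*k^2 + 4) * (1 / Real.sqrt (1 - k^2 * Real.sin θ ^ 2)) := by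
        rw [sFun, ellipticE, ellipticK, intervalIntegral.integral_const_mul,
          intervalIntegral.integral_const_mul]
    _ = ∫ θ in (0:ℝ)..(Real.pi/2), Fk k θ :=
        (intervalIntegral.integral_add i1 i2).symm

lemma Ck_neg (k : ℝ) (hk0 : 0 < k) (hk1 : k < 1) : Ck k < 0 := by
  have hk2 : k^2 < 1 := by nlinarith
  set w : ℝ := Real.sqrt (1-k^2) with hw
  have hw2 : w^2 = 1 - k^2 := Real.sq_sqrt (by linarith)
  have hw0 : 0 < w := Real.sqrt_pos.2 (by linarith)
  have hw1 : w < 1 := by nlinarith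
  have hA : (-4*k^4 + 4*k^2 - 4 : ℝ) = -4*(w^4-w^2+1) := by
    rw [show w^4 = (w^2)^2 by ring, hw2]; ring
  have hB : (2*k^4 - 6*k^2 + 4 : ℝ) = 2*w^2*(1+w^2) := by
    rw [hw2]; ring
  have hAwB : (-4*k^4 + 4*k^2 - 4) * w + (2*k^4 - 6*k^2 + 4) < 0 := by
    rw [hA, hB]
    nlinarith [mul_pos (mul_pos hw0 (by nlinarith : (0:ℝ) < (1-w)^2))
      (by positivity : (0:ℝ) < 2*w^2 + 3*w + 2)]
  have hfac : Ck k = ((-4*k^4 + 4*k^2 - 4) * w + (2*k^4 - 6*k^2 + 4)) * (1 + 1/w) := by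
    rw [Ck, ← hw]
    field_simp
    ring
  rw [hfac]
  exact mul_neg_of_neg_of_pos hAwB (by positivity)

lemma Fk_bound (k θ : ℝ) (hk0 : 0 < k) (hk1 : k < 1) :
    Fk k θ + Fk k (Real.pi/2 - θ) ≤ Ck k := by
  have hk2 : k^2 < 1 := by nlinarith
  have hk2' : 0 < k^2 := by positivity
  set w : ℝ := Real.sqrt (1-k^2) with hw
  have hw2 : w^2 = 1 - k^2 := Real.sq_sqrt (by linarith)
  have hw0 : 0 < w := Real.sqrt_pos.2 (by linarith)
  set a : ℝ := Real.sqrt (1 - k^2 * Real.sin θ ^ 2) with ha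
  set b : ℝ := Real.sqrt (1 - k^2 * Real.sin (Real.pi/2 - θ) ^ 2) with hb
  have hs2 : Real.sin (Real.pi/2 - θ) = Real.cos θ := Real.sin_pi_div_two_sub θ
  have hupos := u_pos k hk2 θ
  have hupos' := u_pos k hk2 (Real.pi/2 - θ)
  have ha1 : a ≤ 1 := Real.sqrt_le_one.mpr (by nlinarith [sq_nonneg (Real.sin θ)])
  have hb1 : b ≤ 1 := Real.sqrt_le_one.mpr (by nlinarith [sq_nonneg (Real.sin (Real.pi/2 - θ))])
  have ha0 : w ≤ a := Real.sqrt_le_sqrt (by nlinarith [Real.sin_sq_le_one θ])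
  have hb0 : w ≤ b := Real.sqrt_le_sqrt (by nlinarith [Real.sin_sq_le_one (Real.pi/2 - θ)])
  have ha2 : a^2 = 1 - k^2 * Real.sin θ ^ 2 := Real.sq_sqrt hupos.le
  have hb2 : b^2 = 1 - k^2 * Real.sin (Real.pi/2 - θ) ^ 2 := Real.sq_sqrt hupos'.le
  have hab : a^2 + b^2 = 1 + w^2 := by
    rw [ha2, hb2, hw2, hs2]
    nlinarith [Real.sin_sq_add_cos_sq θ]
  have hkey := key w a b hw0 ha0 ha1 hb0 hb1 hab
  have hA : (-4*k^4 + 4*k^2 - 4 : ℝ) = -4*(w^4-w^2+1) := by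
    rw [show w^4 = (w^2)^2 by ring, hw2]; ring
  have hB : (2*k^4 - 6*k^2 + 4 : ℝ) = 2*w^2*(1+w^2) := by
    rw [hw2]; ring
  have ha0' : 0 < a := lt_of_lt_of_le hw0 ha0
  have hb0' : 0 < b := lt_of_lt_of_le hw0 hb0
  calc Fk k θ + Fk k (Real.pi/2 - θ)
      = (-4*(w^4-w^2+1))*(a+b) + (2*w^2*(1+w^2))/a + (2*w^2*(1+w^2))/b := by
        rw [Fk, Fk, ← ha, ← hb, hA, hB]
        field_simp
        ring
    _ ≤ (-4*(w^4-w^2+1))*(1+w) + (2*w^2*(1+w^2)) + (2*w^2*(1+w^2))/w := hkey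
    _ = Ck k := by rw [Ck, ← hw, hA, hB]

theorem stmt1 (k : ℝ) (hk : k ∈ Set.Ioo (0:ℝ) 1) : sFun k < 0 := by
  obtain ⟨hk0, hk1⟩ := hk
  have hk2 : k^2 < 1 := by nlinarith
  have hF_cont := Fk_cont k hk2
  have hF_int : IntervalIntegrable (Fk k) MeasureTheory.volume 0 (Real.pi/2) :=
    hF_cont.intervalIntegrable _ _
  have hF_int' : IntervalIntegrable (fun θ => Fk k (Real.pi/2 - θ))
      MeasureTheory.volume 0 (Real.pi/2) :=
    (hF_cont.comp (continuous_const.sub continuous_id)).intervalIntegrable _ _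
  have hsym : ∫ θ in (0:ℝ)..(Real.pi/2), Fk k θ
      = ∫ θ in (0:ℝ)..(Real.pi/2), Fk k (Real.pi/2 - θ) := by
    rw [intervalIntegral.integral_comp_sub_left (Fk k) (Real.pi/2)]
    norm_num
  have hpi : (0:ℝ) < Real.pi/2 := by positivity
  have hint : ∫ θ in (0:ℝ)..(Real.pi/2), (Fk k θ + Fk k (Real.pi/2 - θ))
      ≤ ∫ θ in (0:ℝ)..(Real.pi/2), Ck k :=
    intervalIntegral.integral_mono_on hpi.le (hF_int.add hF_int')
      intervalIntegrable_const (fun θ _ => Fk_bound k θ hk0 hk1)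
  rw [intervalIntegral.integral_add hF_int hF_int', ← hsym,
    intervalIntegral.integral_const] at hint
  have hCneg := Ck_neg k hk0 hk1
  have hCp : (Real.pi/2 - 0) • Ck k < 0 := by
    rw [smul_eq_mul, sub_zero]
    exact mul_neg_of_pos_of_neg hpi hCneg
  rw [sFun_eq k hk2]
  linarith
end

section
/- Suppose real numbers β₁ < 0 < β₂ < β₃ satisfy β₁+β₂+β₃ = 5(c-1)/4 and β₁β₂+β₁β₃+β₂β₃ = 0 for some real c. Then c > 1 and 0 < β₂ < 5(c-1)/6 < β₃ < 5(c-1)/4. -/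
theorem stmt2 (c β₁ β₂ β₃ : ℝ)
    (h1 : β₁ < 0) (h2 : 0 < β₂) (h3 : β₂ < β₃)
    (hsum : β₁ + β₂ + β₃ = 5*(c-1)/4)
    (hprod : β₁*β₂ + β₁*β₃ + β₂*β₃ = 0) :
    1 < c ∧ 0 < β₂ ∧ β₂ < 5*(c-1)/6 ∧ 5*(c-1)/6 < β₃ ∧ β₃ < 5*(c-1)/4 := by
  have hp : 0 < β₂ + β₃ := by linarith
  have hb1 : β₁ = -(β₂*β₃)/(β₂+β₃) := by
    field_simp
    nlinarith [hprod]
  refine ⟨?_, h2, ?_, ?_, ?_⟩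
  · nlinarith [sq_nonneg (β₂+β₃), sq_nonneg (β₂-β₃), mul_pos h2 (h2.trans h3)]
  · nlinarith [mul_pos h2 (h2.trans h3), sq_nonneg (β₂-β₃), mul_pos (sub_pos.2 h3) (show (0:ℝ) < β₂+2*β₃ by linarith)]
  · nlinarith [mul_pos (sub_pos.2 h3) (show (0:ℝ) < β₃+2*β₂ by linarith)]
  · nlinarith [mul_pos h2 h2, hp]
end

section
/- The function g(k) = 64 K(k)² √(k⁴ - k² + 1) is strictly increasing on (0,1), satisfies g(k) → 16π² as k → 0⁺, and g(k) → +∞ as k → 1⁻. -/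
open Filter

/-- g(k) = 64 K(k)² √(k⁴ - k² + 1). -/
noncomputable def gFun (k : ℝ) : ℝ :=
  64 * ellipticK k ^ 2 * Real.sqrt (k^4 - k^2 + 1)

section Aux
open Real MeasureTheory intervalIntegral Set Filter

lemma aux_pos {k : ℝ} (hk : k^2 < 1) (θ : ℝ) : 0 < 1 - k^2 * Real.sin θ ^ 2 := by
  nlinarith [Real.sin_sq_le_one θ, sq_nonneg k, sq_nonneg (Real.sin θ), mul_le_mul_of_nonneg_left (Real.sin_sq_le_one θ) (sq_nonneg k)]

lemma contF {k : ℝ} (hk : k^2 < 1) :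
    Continuous (fun θ : ℝ => 1 / Real.sqrt (1 - k^2 * Real.sin θ ^ 2)) := by
  apply Continuous.div continuous_const
  · exact (continuous_const.sub (continuous_const.mul ((Real.continuous_sin.pow 2)))).sqrt
  · intro θ
    exact (Real.sqrt_pos.mpr (aux_pos hk θ)).ne'

lemma contF' {k : ℝ} (hk : k^2 < 1) :
    Continuous (fun θ : ℝ => k * Real.sin θ ^ 2 /
      ((1 - k^2 * Real.sin θ ^ 2) * Real.sqrt (1 - k^2 * Real.sin θ ^ 2))) := by
  apply Continuous.div (continuous_const.mul (Real.continuous_sin.pow 2))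
  · exact (continuous_const.sub (continuous_const.mul (Real.continuous_sin.pow 2))).mul
      (continuous_const.sub (continuous_const.mul (Real.continuous_sin.pow 2))).sqrt
  · intro θ
    exact (mul_pos (aux_pos hk θ) (Real.sqrt_pos.mpr (aux_pos hk θ))).ne'

lemma hasDerivAt_F {x : ℝ} (θ : ℝ) (hx : x^2 < 1) :
    HasDerivAt (fun y : ℝ => 1 / Real.sqrt (1 - y^2 * Real.sin θ ^ 2))
      (x * Real.sin θ ^ 2 / ((1 - x^2 * Real.sin θ ^ 2) * Real.sqrt (1 - x^2 * Real.sin θ ^ 2))) x := by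
  have hu : 0 < 1 - x^2 * Real.sin θ ^ 2 := aux_pos hx θ
  have h1 : HasDerivAt (fun y : ℝ => 1 - y^2 * Real.sin θ ^ 2) (-(2*x*Real.sin θ ^ 2)) x := by
    have := ((hasDerivAt_pow 2 x).mul_const (Real.sin θ ^ 2)).const_sub 1
    simpa using this.congr_deriv (by ring)
  have h2 := (Real.hasDerivAt_sqrt hu.ne').comp x h1
  have hs : Real.sqrt (1 - x^2 * Real.sin θ ^ 2) ≠ 0 := (Real.sqrt_pos.mpr hu).ne'
  have h3 := h2.inv hs
  have h3' : HasDerivAt (fun y : ℝ => 1 / Real.sqrt (1 - y^2 * Real.sin θ ^ 2))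
      (-(1 / (2 * Real.sqrt (1 - x ^ 2 * Real.sin θ ^ 2)) * -(2 * x * Real.sin θ ^ 2)) /
        Real.sqrt (1 - x ^ 2 * Real.sin θ ^ 2) ^ 2) x := by
    have e : (fun y : ℝ => 1 / Real.sqrt (1 - y^2 * Real.sin θ ^ 2)) =
        ((fun x => Real.sqrt x) ∘ fun y => 1 - y ^ 2 * Real.sin θ ^ 2)⁻¹ := by
      funext y; simp [one_div]
    rw [e]; exact h3
  convert h3' using 1
  have hssq : Real.sqrt (1 - x^2 * Real.sin θ ^ 2) ^ 2 = 1 - x^2 * Real.sin θ ^ 2 :=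
    Real.sq_sqrt hu.le
  field_simp
  nlinarith [Real.sqrt_pos.mpr hu, hssq, congrArg (fun t => x * Real.sin θ ^ 2 * t) hssq]


lemma hasDerivAt_ellipticK {x : ℝ} (hx0 : 0 < x) (hx1 : x < 1) :
    HasDerivAt ellipticK
      (∫ θ in (0:ℝ)..(Real.pi/2), x * Real.sin θ ^ 2 /
        ((1 - x^2 * Real.sin θ ^ 2) * Real.sqrt (1 - x^2 * Real.sin θ ^ 2))) x := by
  set ε := (1 - x) / 2 with hε
  have hεpos : 0 < ε := by simp [hε]; linarith
  set r := (1 + x) / 2 with hr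
  have hr1 : r < 1 := by simp [hr]; linarith
  have hr0 : 0 < r := by simp [hr]; linarith
  have hball : ∀ y ∈ Metric.ball x ε, |y| ≤ r ∧ y^2 < 1 := by
    intro y hy
    rw [Metric.mem_ball, Real.dist_eq] at hy
    constructor
    · rw [abs_le]; rw [abs_lt] at hy; constructor <;> [linarith; linarith]
    · have : |y| < 1 := by rw [abs_lt] at hy ⊢; constructor <;> linarith
      nlinarith [abs_nonneg y, sq_abs y]
  have hrsq : r^2 < 1 := by nlinarith
  set bound : ℝ → ℝ := fun _ => r / ((1 - r^2) * Real.sqrt (1 - r^2)) with hbound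
  have key := intervalIntegral.hasDerivAt_integral_of_dominated_loc_of_deriv_le
    (F := fun y θ => 1 / Real.sqrt (1 - y^2 * Real.sin θ ^ 2))
    (F' := fun y θ => y * Real.sin θ ^ 2 /
      ((1 - y^2 * Real.sin θ ^ 2) * Real.sqrt (1 - y^2 * Real.sin θ ^ 2)))
    (x₀ := x) (a := 0) (b := Real.pi/2) (μ := volume) (bound := bound) (Metric.ball_mem_nhds x hεpos)
    ?_ ?_ ?_ ?_ ?_ ?_
  · exact key.2
  · -- measurability of F y
    filter_upwards [Metric.ball_mem_nhds x hεpos] with y hy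
    exact (contF (hball y hy).2).aestronglyMeasurable
  · have hx2 : x^2 < 1 := by nlinarith
    exact ((contF hx2).intervalIntegrable _ _)
  · have hx2 : x^2 < 1 := by nlinarith
    exact (contF' hx2).aestronglyMeasurable
  · -- bound
    apply ae_of_all
    intro θ _ y hy
    obtain ⟨hyr, hy1⟩ := hball y hy
    have hu : 0 < 1 - y^2 * Real.sin θ ^ 2 := aux_pos hy1 θ
    have hu_ge : 1 - r^2 ≤ 1 - y^2 * Real.sin θ ^ 2 := by
      have : y^2 * Real.sin θ ^ 2 ≤ r^2 := by
        have h1 : y^2 ≤ r^2 := by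
          have := pow_le_pow_left₀ (abs_nonneg y) hyr 2
          rwa [sq_abs] at this
        nlinarith [Real.sin_sq_le_one θ, sq_nonneg y, Real.sin_sq_le_one θ]
      linarith
    have hrsqpos : 0 < 1 - r^2 := by linarith
    have hsq1 : Real.sqrt (1 - r^2) ≤ Real.sqrt (1 - y^2 * Real.sin θ ^ 2) :=
      Real.sqrt_le_sqrt hu_ge
    have hden : (1 - r^2) * Real.sqrt (1 - r^2) ≤
        (1 - y^2 * Real.sin θ ^ 2) * Real.sqrt (1 - y^2 * Real.sin θ ^ 2) := by
      apply mul_le_mul hu_ge hsq1 (Real.sqrt_nonneg _) hu.le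
    have hdenpos : 0 < (1 - r^2) * Real.sqrt (1 - r^2) :=
      mul_pos hrsqpos (Real.sqrt_pos.mpr hrsqpos)
    rw [Real.norm_eq_abs, abs_div]
    rw [abs_of_pos (mul_pos hu (Real.sqrt_pos.mpr hu))]
    apply div_le_div₀ hr0.le ?_ hdenpos hden
    rw [abs_mul]
    calc |y| * |Real.sin θ ^ 2| ≤ r * 1 := by
          apply mul_le_mul hyr ?_ (abs_nonneg _) hr0.le
          rw [abs_of_nonneg (sq_nonneg _)]
          exact Real.sin_sq_le_one θ
      _ = r := mul_one r
  · exact intervalIntegrable_const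
  · apply ae_of_all
    intro θ _ y hy
    exact hasDerivAt_F θ (hball y hy).2


lemma sign_helper {c sa sb : ℝ} (hsa : 0 < sa) (hsb : 0 < sb)
    (key : 0 ≤ c * (sb - sa)) : 0 ≤ c / sa - c / sb := by
  have h : c / sa - c / sb = c * (sb - sa) / (sa * sb) := by field_simp
  rw [h]
  exact div_nonneg key (mul_pos hsa hsb).le

lemma contf {k : ℝ} (hk : k^2 < 1) :
    Continuous (fun θ : ℝ => (2*Real.sin θ^2 - 1) / Real.sqrt (1 - k^2*Real.sin θ^2)) := by
  apply Continuous.div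
  · exact (continuous_const.mul (Real.continuous_sin.pow 2)).sub continuous_const
  · exact (continuous_const.sub (continuous_const.mul (Real.continuous_sin.pow 2))).sqrt
  · intro θ; exact (Real.sqrt_pos.mpr (aux_pos hk θ)).ne'

lemma pointwise_sym {k : ℝ} (hk : k^2 < 1) (θ : ℝ) :
    0 ≤ (2*Real.sin θ^2 - 1)/Real.sqrt (1 - k^2*Real.sin θ^2) +
        (2*Real.sin (Real.pi/2 - θ)^2 - 1)/Real.sqrt (1 - k^2*Real.sin (Real.pi/2-θ)^2) := by
  rw [Real.sin_pi_div_two_sub]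
  have hc : Real.cos θ^2 = 1 - Real.sin θ^2 := by
    have := Real.sin_sq_add_cos_sq θ; linarith
  rw [hc]
  set s := Real.sin θ^2 with hs
  have hs0 : 0 ≤ s := sq_nonneg _
  have hs1 : s ≤ 1 := Real.sin_sq_le_one θ
  have ha : 0 < 1 - k^2*s := aux_pos hk θ
  have hb : 0 < 1 - k^2*(1-s) := by nlinarith [sq_nonneg k]
  have hrw : (2*(1-s)-1)/Real.sqrt (1 - k^2*(1-s)) = -((2*s-1)/Real.sqrt (1 - k^2*(1-s))) := by
    rw [← neg_div]; ring_nf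
  rw [hrw, ← sub_eq_add_neg]
  apply sign_helper (Real.sqrt_pos.mpr ha) (Real.sqrt_pos.mpr hb)
  rcases le_total s (1/2) with h | h
  · have h2 : Real.sqrt (1 - k^2*(1-s)) ≤ Real.sqrt (1 - k^2*s) :=
      Real.sqrt_le_sqrt (by nlinarith [sq_nonneg k])
    nlinarith
  · have h2 : Real.sqrt (1 - k^2*s) ≤ Real.sqrt (1 - k^2*(1-s)) :=
      Real.sqrt_le_sqrt (by nlinarith [sq_nonneg k])
    nlinarith

lemma I_nonneg {k : ℝ} (hk : k^2 < 1) :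
    0 ≤ ∫ θ in (0:ℝ)..(Real.pi/2), (2*Real.sin θ^2 - 1)/Real.sqrt (1 - k^2*Real.sin θ^2) := by
  set f : ℝ → ℝ := fun θ => (2*Real.sin θ^2 - 1)/Real.sqrt (1 - k^2*Real.sin θ^2) with hf
  have hcont : Continuous f := contf hk
  have hrefl : ∫ θ in (0:ℝ)..(Real.pi/2), f (Real.pi/2 - θ) = ∫ θ in (0:ℝ)..(Real.pi/2), f θ := by
    rw [intervalIntegral.integral_comp_sub_left f (Real.pi/2)]
    norm_num
  have hsum : (2:ℝ) * ∫ θ in (0:ℝ)..(Real.pi/2), f θ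
      = ∫ θ in (0:ℝ)..(Real.pi/2), (f θ + f (Real.pi/2 - θ)) := by
    have h2 : IntervalIntegrable (fun θ => f (Real.pi/2 - θ)) volume 0 (Real.pi/2) := by
      exact (hcont.comp (continuous_const.sub continuous_id)).intervalIntegrable _ _
    rw [intervalIntegral.integral_add (hcont.intervalIntegrable _ _) h2, hrefl]
    ring
  have hnn : 0 ≤ ∫ θ in (0:ℝ)..(Real.pi/2), (f θ + f (Real.pi/2 - θ)) := by
    apply intervalIntegral.integral_nonneg (by positivity)
    intro θ _
    exact pointwise_sym hk θ
  linarith [hsum ▸ hnn]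

lemma ellipticK_pos {k : ℝ} (hk : k^2 < 1) : Real.pi/2 ≤ ellipticK k := by
  rw [ellipticK]
  calc Real.pi/2 = ∫ _ in (0:ℝ)..(Real.pi/2), (1:ℝ) := by simp
    _ ≤ _ := by
      apply intervalIntegral.integral_mono_on (by positivity)
        intervalIntegrable_const ((contF hk).intervalIntegrable _ _)
      intro θ _
      have hu := aux_pos hk θ
      rw [le_div_iff₀ (Real.sqrt_pos.mpr hu), one_mul]
      calc Real.sqrt (1 - k^2*Real.sin θ^2) ≤ Real.sqrt 1 :=
            Real.sqrt_le_sqrt (by nlinarith [sq_nonneg k, sq_nonneg (Real.sin θ)])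
        _ = 1 := Real.sqrt_one

lemma deriv_lower {x : ℝ} (hx0 : 0 < x) (hx1 : x < 1) :
    x / 2 * ellipticK x ≤ ∫ θ in (0:ℝ)..(Real.pi/2), x * Real.sin θ ^ 2 /
      ((1 - x^2 * Real.sin θ ^ 2) * Real.sqrt (1 - x^2 * Real.sin θ ^ 2)) := by
  have hx2 : x^2 < 1 := by nlinarith
  have hstep1 : ∀ θ : ℝ, x/2 * ((2*Real.sin θ^2 - 1)/Real.sqrt (1 - x^2*Real.sin θ^2)
        + 1/Real.sqrt (1 - x^2*Real.sin θ^2))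
      ≤ x * Real.sin θ ^ 2 / ((1 - x^2 * Real.sin θ ^ 2) * Real.sqrt (1 - x^2 * Real.sin θ ^ 2)) := by
    intro θ
    have hu : 0 < 1 - x^2*Real.sin θ^2 := aux_pos hx2 θ
    have hsq : 0 < Real.sqrt (1 - x^2*Real.sin θ^2) := Real.sqrt_pos.mpr hu
    have hlhs : x/2 * ((2*Real.sin θ^2 - 1)/Real.sqrt (1 - x^2*Real.sin θ^2)
        + 1/Real.sqrt (1 - x^2*Real.sin θ^2)) = x * Real.sin θ^2 / Real.sqrt (1 - x^2*Real.sin θ^2) := by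
      field_simp; ring
    rw [hlhs]
    -- x*s/√u ≤ x*s/(u√u) since u√u ≤ √u
    apply div_le_div_of_nonneg_left ?_ (mul_pos hu hsq) ?_
    · positivity
    · calc (1 - x^2*Real.sin θ^2) * Real.sqrt (1 - x^2*Real.sin θ^2)
          ≤ 1 * Real.sqrt (1 - x^2*Real.sin θ^2) := by
            apply mul_le_mul_of_nonneg_right ?_ hsq.le
            nlinarith [sq_nonneg x, sq_nonneg (Real.sin θ)]
        _ = Real.sqrt (1 - x^2*Real.sin θ^2) := one_mul _
  have hint1 : IntervalIntegrable (fun θ => x/2 * ((2*Real.sin θ^2 - 1)/Real.sqrt (1 - x^2*Real.sin θ^2)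
        + 1/Real.sqrt (1 - x^2*Real.sin θ^2))) volume 0 (Real.pi/2) :=
    (continuous_const.mul ((contf hx2).add (contF hx2))).intervalIntegrable _ _
  have hint2 : IntervalIntegrable (fun θ => x * Real.sin θ ^ 2 /
      ((1 - x^2 * Real.sin θ ^ 2) * Real.sqrt (1 - x^2 * Real.sin θ ^ 2))) volume 0 (Real.pi/2) :=
    (contF' hx2).intervalIntegrable _ _
  have hmono := intervalIntegral.integral_mono_on (by positivity) hint1 hint2 (fun θ _ => hstep1 θ)
  have heq : ∫ θ in (0:ℝ)..(Real.pi/2), x/2 * ((2*Real.sin θ^2 - 1)/Real.sqrt (1 - x^2*Real.sin θ^2)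
        + 1/Real.sqrt (1 - x^2*Real.sin θ^2))
      = x/2 * ((∫ θ in (0:ℝ)..(Real.pi/2), (2*Real.sin θ^2 - 1)/Real.sqrt (1 - x^2*Real.sin θ^2))
        + ellipticK x) := by
    rw [intervalIntegral.integral_const_mul,
      intervalIntegral.integral_add ((contf hx2).intervalIntegrable _ _) ((contF hx2).intervalIntegrable _ _)]
    rfl
  rw [heq] at hmono
  have hI := I_nonneg hx2
  nlinarith [hmono, hI, ellipticK_pos hx2, Real.pi_pos]


lemma p_pos (x : ℝ) : 0 < x^4 - x^2 + 1 := by nlinarith [sq_nonneg (x^2 - 1/2)]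

lemma hasDerivAt_gFun {x : ℝ} (hx0 : 0 < x) (hx1 : x < 1) :
    ∃ G : ℝ, HasDerivAt gFun G x ∧ 0 < G := by
  have hx2 : x^2 < 1 := by nlinarith
  set D := ∫ θ in (0:ℝ)..(Real.pi/2), x * Real.sin θ ^ 2 /
      ((1 - x^2 * Real.sin θ ^ 2) * Real.sqrt (1 - x^2 * Real.sin θ ^ 2)) with hD
  have hK := hasDerivAt_ellipticK hx0 hx1
  have hp : HasDerivAt (fun y : ℝ => y^4 - y^2 + 1) (4*x^3 - 2*x) x := by
    have h := ((hasDerivAt_pow 4 x).sub (hasDerivAt_pow 2 x)).add_const 1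
    norm_num at h ⊢
    exact h
  have hppos := p_pos x
  have hsqrtp : HasDerivAt (fun y : ℝ => Real.sqrt (y^4 - y^2 + 1))
      (1 / (2 * Real.sqrt (x^4 - x^2 + 1)) * (4*x^3 - 2*x)) x :=
    (Real.hasDerivAt_sqrt hppos.ne').comp x hp
  have hKsq : HasDerivAt (fun y : ℝ => 64 * ellipticK y ^ 2)
      (64 * (2 * ellipticK x ^ 1 * D)) x := by
    have := (hK.pow 2).const_mul (64:ℝ)
    norm_num at this ⊢
    convert this using 1 <;> ring
  have hg : HasDerivAt gFun
      (64 * (2 * ellipticK x ^ 1 * D) * Real.sqrt (x^4 - x^2 + 1)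
        + (64 * ellipticK x ^ 2) * (1 / (2 * Real.sqrt (x^4 - x^2 + 1)) * (4*x^3 - 2*x))) x := by
    have := hKsq.mul hsqrtp
    exact this
  refine ⟨_, hg, ?_⟩
  set K := ellipticK x with hKdef
  have hc : 0 < Real.sqrt (x^4 - x^2 + 1) := Real.sqrt_pos.mpr hppos
  have hc2 : Real.sqrt (x^4 - x^2 + 1) ^ 2 = x^4 - x^2 + 1 := Real.sq_sqrt hppos.le
  have hDlow : x/2 * K ≤ D := deriv_lower hx0 hx1
  have hK0 : 0 < K := lt_of_lt_of_le (by positivity) (ellipticK_pos hx2)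
  have hform : 64 * (2 * K ^ 1 * D) * Real.sqrt (x^4 - x^2 + 1)
        + (64 * K ^ 2) * (1 / (2 * Real.sqrt (x^4 - x^2 + 1)) * (4*x^3 - 2*x))
      = (128 * K * D * (x^4 - x^2 + 1) + 32 * K^2 * (4*x^3 - 2*x)) / Real.sqrt (x^4 - x^2 + 1) := by
    rw [eq_div_iff hc.ne']
    generalize Real.sqrt (x^4 - x^2 + 1) = s at hc hc2 ⊢
    field_simp
    linear_combination (256*D) * hc2
  rw [hform]
  apply div_pos ?_ hc
  have h1 : 128 * K * (x/2 * K) * (x^4 - x^2 + 1) ≤ 128 * K * D * (x^4 - x^2 + 1) := by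
    have hcoef : (0:ℝ) ≤ 128 * K * (x^4 - x^2 + 1) := by positivity
    nlinarith [mul_le_mul_of_nonneg_left hDlow hcoef]
  have h2 : 0 < 64 * x * K^2 * (x^4 + x^2) := by positivity
  nlinarith [h1, h2]


lemma strictMono_g : StrictMonoOn gFun (Set.Ioo (0:ℝ) 1) := by
  apply strictMonoOn_of_deriv_pos (convex_Ioo 0 1)
  · intro x hx
    obtain ⟨G, hG, _⟩ := hasDerivAt_gFun hx.1 hx.2
    exact hG.differentiableAt.continuousAt.continuousWithinAt
  · rw [interior_Ioo]
    intro x hx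
    obtain ⟨G, hG, hGpos⟩ := hasDerivAt_gFun hx.1 hx.2
    rwa [hG.deriv]

lemma tendsto_K_zero : Tendsto ellipticK (nhdsWithin 0 (Set.Ioi 0)) (nhds (Real.pi/2)) := by
  have h : Tendsto (fun k => ∫ θ in (0:ℝ)..(Real.pi/2), 1 / Real.sqrt (1 - k^2 * Real.sin θ ^ 2))
      (nhdsWithin 0 (Set.Ioi 0)) (nhds (∫ _ in (0:ℝ)..(Real.pi/2), (1:ℝ))) := by
    apply intervalIntegral.tendsto_integral_filter_of_dominated_convergence (bound := fun _ => 2)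
    · filter_upwards [Ioc_mem_nhdsGT_of_mem (by norm_num : (0:ℝ) ∈ Set.Ico (0:ℝ) (1/2))] with k hk
      have hk2 : k^2 < 1 := by
        obtain ⟨h1, h2⟩ := hk; nlinarith
      exact (contF hk2).aestronglyMeasurable
    · filter_upwards [Ioc_mem_nhdsGT_of_mem (by norm_num : (0:ℝ) ∈ Set.Ico (0:ℝ) (1/2))] with k hk
      apply ae_of_all
      intro θ _
      obtain ⟨h1, h2⟩ := hk
      have hu : (3:ℝ)/4 ≤ 1 - k^2 * Real.sin θ ^ 2 := by
        nlinarith [Real.sin_sq_le_one θ, sq_nonneg k, sq_nonneg (Real.sin θ),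
          mul_le_mul_of_nonneg_left (Real.sin_sq_le_one θ) (sq_nonneg k)]
      have hs : (1:ℝ)/2 ≤ Real.sqrt (1 - k^2 * Real.sin θ ^ 2) := by
        rw [show (1:ℝ)/2 = Real.sqrt (1/4) by
          rw [show (1:ℝ)/4 = (1/2)^2 by norm_num, Real.sqrt_sq (by norm_num)]]
        exact Real.sqrt_le_sqrt (by linarith)
      rw [Real.norm_eq_abs, abs_of_nonneg (by positivity)]
      rw [div_le_iff₀ (by linarith)]
      linarith
    · exact intervalIntegrable_const
    · apply ae_of_all
      intro θ _
      have hcont : ContinuousAt (fun k : ℝ => 1 / Real.sqrt (1 - k^2 * Real.sin θ ^ 2)) 0 := by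
        apply ContinuousAt.div continuousAt_const
        · exact (Real.continuous_sqrt.comp
            (continuous_const.sub ((continuous_pow 2).mul continuous_const))).continuousAt
        · simp
      have := hcont.tendsto
      simp only [ne_eq, OfNat.ofNat_ne_zero, not_false_eq_true, zero_pow, zero_mul, sub_zero,
        Real.sqrt_one, div_one] at this
      exact this.mono_left nhdsWithin_le_nhds
  have h2 : (∫ _ in (0:ℝ)..(Real.pi/2), (1:ℝ)) = Real.pi/2 := by simp
  rw [h2] at h
  exact h

lemma tendsto_g_zero : Tendsto gFun (nhdsWithin 0 (Set.Ioi 0)) (nhds (16 * Real.pi ^ 2)) := by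
  have h1 : Tendsto (fun k : ℝ => Real.sqrt (k^4 - k^2 + 1)) (nhdsWithin 0 (Set.Ioi 0)) (nhds 1) := by
    have hc : Continuous (fun k : ℝ => Real.sqrt (k^4 - k^2 + 1)) :=
      (((continuous_pow 4).sub (continuous_pow 2)).add continuous_const).sqrt
    have := hc.continuousAt (x := 0)
    have h0 : Real.sqrt ((0:ℝ)^4 - 0^2 + 1) = 1 := by norm_num
    rw [ContinuousAt, h0] at this
    exact this.mono_left nhdsWithin_le_nhds
  have h2 := tendsto_K_zero
  have h3 : Tendsto gFun (nhdsWithin 0 (Set.Ioi 0))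
      (nhds (64 * (Real.pi/2)^2 * 1)) := by
    unfold gFun
    exact ((tendsto_const_nhds.mul (h2.pow 2)).mul h1)
  convert h3 using 2
  ring

lemma tendsto_K_one : Tendsto ellipticK (nhdsWithin 1 (Set.Iio 1)) atTop := by
  set c : ℝ → ℝ := fun k => Real.sqrt (1 - k^2) with hc
  have hlow : ∀ k ∈ Set.Ioo (0:ℝ) 1,
      Real.log (c k + Real.pi/2) + -Real.log (c k) ≤ ellipticK k := by
    intro k hk
    have hk2 : k^2 < 1 := by nlinarith [hk.1, hk.2]
    have hcpos : 0 < c k := Real.sqrt_pos.mpr (by nlinarith)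
    have hc2 : c k ^ 2 = 1 - k^2 := Real.sq_sqrt (by nlinarith)
    -- pointwise bound
    have hpt : ∀ θ ∈ Set.Icc (0:ℝ) (Real.pi/2),
        1 / (c k + (Real.pi/2 - θ)) ≤ 1 / Real.sqrt (1 - k^2 * Real.sin θ ^ 2) := by
      intro θ hθ
      have hu : 0 < 1 - k^2 * Real.sin θ ^ 2 := aux_pos hk2 θ
      have hcos : Real.cos θ ≤ Real.pi/2 - θ := by
        rw [← Real.sin_pi_div_two_sub]
        exact Real.sin_le (by linarith [hθ.2])
      have hcos0 : 0 ≤ Real.cos θ := Real.cos_nonneg_of_mem_Icc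
        ⟨by linarith [hθ.1, Real.pi_pos], hθ.2⟩
      have hsc : Real.sin θ ^ 2 = 1 - Real.cos θ ^ 2 := by
        have := Real.sin_sq_add_cos_sq θ; linarith
      have hbound : 1 - k^2 * Real.sin θ ^ 2 ≤ (c k + (Real.pi/2 - θ))^2 := by
        have e1 : 1 - k^2 * Real.sin θ ^ 2 = (1 - k^2) + k^2 * Real.cos θ ^ 2 := by
          rw [hsc]; ring
        have e2 : k^2 * Real.cos θ ^ 2 ≤ Real.cos θ ^ 2 := by
          nlinarith [sq_nonneg (Real.cos θ)]
        have e3 : Real.cos θ ^ 2 ≤ (Real.pi/2 - θ)^2 := by nlinarith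
        nlinarith [mul_nonneg hcpos.le (by linarith [hθ.2] : (0:ℝ) ≤ Real.pi/2 - θ)]
      have hsqle : Real.sqrt (1 - k^2 * Real.sin θ ^ 2) ≤ c k + (Real.pi/2 - θ) := by
        calc Real.sqrt (1 - k^2 * Real.sin θ ^ 2) ≤ Real.sqrt ((c k + (Real.pi/2 - θ))^2) :=
              Real.sqrt_le_sqrt hbound
          _ = c k + (Real.pi/2 - θ) := Real.sqrt_sq (by nlinarith [hθ.2]) 
      exact one_div_le_one_div_of_le (Real.sqrt_pos.mpr hu) hsqle
    have hint1 : IntervalIntegrable (fun θ => 1 / (c k + (Real.pi/2 - θ))) volume 0 (Real.pi/2) := by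
      apply ContinuousOn.intervalIntegrable
      apply ContinuousOn.div continuousOn_const
      · exact (continuousOn_const.add (continuousOn_const.sub continuousOn_id))
      · intro θ hθ
        rw [Set.uIcc_of_le (by positivity)] at hθ
        have := hθ.2
        nlinarith [hcpos]
    have hmono := intervalIntegral.integral_mono_on (by positivity) hint1
      ((contF hk2).intervalIntegrable _ _) hpt
    -- compute LHS integral
    have hcomp : ∫ θ in (0:ℝ)..(Real.pi/2), 1 / (c k + (Real.pi/2 - θ))
        = Real.log (c k + Real.pi/2) - Real.log (c k) := by
      have e1 : ∫ θ in (0:ℝ)..(Real.pi/2), 1 / (c k + (Real.pi/2 - θ))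
          = ∫ u in (0:ℝ)..(Real.pi/2), 1 / (c k + u) := by
        rw [intervalIntegral.integral_comp_sub_left (fun u => 1 / (c k + u)) (Real.pi/2)]
        norm_num
      have e2 : ∫ u in (0:ℝ)..(Real.pi/2), 1 / (c k + u)
          = ∫ u in (c k + 0)..(c k + Real.pi/2), 1 / u := by
        rw [intervalIntegral.integral_comp_add_left (fun u => 1/u) (c k)]
      rw [e1, e2]
      rw [integral_one_div]
      · rw [add_zero, Real.log_div (by positivity) hcpos.ne']
      · intro hmem
        rw [Set.uIcc_of_le (by linarith [Real.pi_pos, hcpos] : c k + 0 ≤ c k + Real.pi/2)] at hmem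
        have := hmem.1
        rw [add_zero] at this
        linarith [hcpos]
    rw [hcomp] at hmono
    rw [ellipticK] at *
    linarith [hmono]
  -- the lower bound tends to atTop
  have hc0 : Tendsto c (nhdsWithin 1 (Set.Iio 1)) (nhdsWithin 0 (Set.Ioi 0)) := by
    rw [tendsto_nhdsWithin_iff]
    constructor
    · have hcc : Continuous c := (continuous_const.sub (continuous_pow 2)).sqrt
      have h1 : c 1 = 0 := by rw [hc]; norm_num
      have := hcc.continuousAt (x := 1)
      rw [ContinuousAt, h1] at this
      exact this.mono_left nhdsWithin_le_nhds
    · filter_upwards [Ioo_mem_nhdsLT_of_mem (by norm_num : (1:ℝ) ∈ Set.Ioc (0:ℝ) 1)] with k hk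
      exact Real.sqrt_pos.mpr (by nlinarith [hk.1, hk.2])
  have hlog : Tendsto (fun k => -Real.log (c k)) (nhdsWithin 1 (Set.Iio 1)) atTop := by
    have := Real.tendsto_log_nhdsGT_zero.comp hc0
    exact tendsto_neg_atBot_atTop.comp this
  have hlog2 : Tendsto (fun k => Real.log (c k + Real.pi/2)) (nhdsWithin 1 (Set.Iio 1))
      (nhds (Real.log (Real.pi/2))) := by
    have h1 : Tendsto (fun k => c k + Real.pi/2) (nhdsWithin 1 (Set.Iio 1)) (nhds (Real.pi/2)) := by
      have := (hc0.mono_right nhdsWithin_le_nhds).add_const (Real.pi/2)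
      simpa using this
    exact ((Real.continuousAt_log (by positivity)).tendsto).comp h1
  have hlb : Tendsto (fun k => Real.log (c k + Real.pi/2) + -Real.log (c k))
      (nhdsWithin 1 (Set.Iio 1)) atTop := hlog2.add_atTop hlog
  apply tendsto_atTop_mono' _ _ hlb
  filter_upwards [Ioo_mem_nhdsLT_of_mem (by norm_num : (1:ℝ) ∈ Set.Ioc (0:ℝ) 1)] with k hk
  exact hlow k hk

lemma tendsto_g_one : Tendsto gFun (nhdsWithin 1 (Set.Iio 1)) atTop := by
  apply tendsto_atTop_mono' _ _ tendsto_K_one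
  filter_upwards [Ioo_mem_nhdsLT_of_mem (by norm_num : (1:ℝ) ∈ Set.Ioc (0:ℝ) 1)] with k hk
  have hk2 : k^2 < 1 := by nlinarith [hk.1, hk.2]
  have hK : Real.pi/2 ≤ ellipticK k := ellipticK_pos hk2
  have hK1 : 1 ≤ ellipticK k := by nlinarith [Real.pi_gt_three]
  have hsp : (1:ℝ)/2 ≤ Real.sqrt (k^4 - k^2 + 1) := by
    rw [Real.le_sqrt' (by norm_num)]
    nlinarith [sq_nonneg (k^2 - 1/2)]
  unfold gFun
  nlinarith [sq_nonneg (ellipticK k - 1), hK1, hsp]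

end Aux

theorem stmt5 :
    StrictMonoOn gFun (Set.Ioo (0:ℝ) 1) ∧
    Tendsto gFun (nhdsWithin 0 (Set.Ioi 0)) (nhds (16 * Real.pi ^ 2)) ∧
    Tendsto gFun (nhdsWithin 1 (Set.Iio 1)) atTop := by
  exact ⟨strictMono_g, tendsto_g_zero, tendsto_g_one⟩
end
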